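/- For h = 0 and J → 1⁺, the positive solution μ₀(J) of μ₀ = tanh(J μ₀) satisfies μ₀(J)² ~ 3(1 - 1/J); consequently the second derivative with respect to J of the limiting pressure, equal to (1/2) d(μ₀²)/dJ for J > 1 and 0 for J ≤ 1, is discontinuous at J = 1 (second-order phase transition). -/

import Mathlib

open Real Filter

lemma tanh_pos' {x : ℝ} (hx : 0 < x) : 0 < Real.tanh x := by
  rw [Real.tanh_eq_sinh_div_cosh]
  exact div_pos (by rwa [Real.sinh_pos_iff]) (Real.cosh_pos x)

lemma hasDerivAt_tanh' (x : ℝ) : HasDerivAt Real.tanh (1 - Real.tanh x ^ 2) x := by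
  have h : HasDerivAt (fun y => Real.sinh y / Real.cosh y)
      ((Real.cosh x * Real.cosh x - Real.sinh x * Real.sinh x) / Real.cosh x ^ 2) x :=
    (Real.hasDerivAt_sinh x).div (Real.hasDerivAt_cosh x) (ne_of_gt (Real.cosh_pos x))
  have e : ∀ y, Real.tanh y = Real.sinh y / Real.cosh y := fun y => Real.tanh_eq_sinh_div_cosh y
  have h2 : HasDerivAt Real.tanh
      ((Real.cosh x * Real.cosh x - Real.sinh x * Real.sinh x) / Real.cosh x ^ 2) x := by
    exact h.congr_of_eventuallyEq (Filter.Eventually.of_forall e)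
  convert h2 using 1
  have hc := Real.cosh_pos x
  rw [Real.tanh_eq_sinh_div_cosh]
  have : Real.cosh x ^ 2 - Real.sinh x ^ 2 = 1 := Real.cosh_sq_sub_sinh_sq x
  field_simp

lemma key2 {x : ℝ} (hx : 0 < x) : Real.tanh x + Real.tanh x ^ 3 / 3 < x := by
  set ψ : ℝ → ℝ := fun y => y - Real.tanh y - Real.tanh y ^ 3 / 3 with hψ
  have hd : ∀ y : ℝ, HasDerivAt ψ (Real.tanh y ^ 4) y := by
    intro y
    have h1 := hasDerivAt_tanh' y
    have h2 : HasDerivAt (fun z => z - Real.tanh z - Real.tanh z ^ 3 / 3)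
        (1 - (1 - Real.tanh y ^ 2) - (3 * Real.tanh y ^ 2 * (1 - Real.tanh y ^ 2)) / 3) y := by
      exact ((hasDerivAt_id y).sub h1).sub (((h1.pow 3).div_const 3).congr_deriv (by ring))
    convert h2 using 1
    ring
  have hmono : StrictMonoOn ψ (Set.Ici 0) := by
    apply strictMonoOn_of_deriv_pos (convex_Ici 0)
    · exact Continuous.continuousOn (by
        have hct : Continuous Real.tanh :=
          continuous_iff_continuousAt.mpr fun y => (hasDerivAt_tanh' y).continuousAt
        fun_prop)
    · intro y hy
      rw [interior_Ici] at hy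
      rw [(hd y).deriv]
      have := tanh_pos' hy
      positivity
  have := hmono (Set.self_mem_Ici) (Set.mem_Ici.mpr hx.le) hx
  simp only [hψ, Real.tanh_zero] at this
  norm_num at this
  linarith

lemma tanh_lt' {x : ℝ} (hx : 0 < x) : Real.tanh x < x := by
  have h1 := key2 hx
  have h2 := tanh_pos' hx
  nlinarith [pow_pos h2 3]

lemma key3 {x : ℝ} (hx : 0 < x) : x - x ^ 3 / 3 < Real.tanh x := by
  set φ : ℝ → ℝ := fun y => Real.tanh y + y ^ 3 / 3 - y with hφ
  have hd : ∀ y : ℝ, HasDerivAt φ (y ^ 2 - Real.tanh y ^ 2) y := by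
    intro y
    have h2 : HasDerivAt (fun z => Real.tanh z + z ^ 3 / 3 - z)
        ((1 - Real.tanh y ^ 2) + (3 * y ^ 2 * 1) / 3 - 1) y := by
      exact ((hasDerivAt_tanh' y).add (((hasDerivAt_id y).pow 3).div_const 3)).sub (hasDerivAt_id y)
    convert h2 using 1
    ring
  have hmono : StrictMonoOn φ (Set.Ici 0) := by
    apply strictMonoOn_of_deriv_pos (convex_Ici 0)
    · exact Continuous.continuousOn (by
        have hct : Continuous Real.tanh :=
          continuous_iff_continuousAt.mpr fun y => (hasDerivAt_tanh' y).continuousAt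
        fun_prop)
    · intro y hy
      rw [interior_Ici] at hy
      rw [(hd y).deriv]
      have h1 := tanh_lt' hy
      have h2 := tanh_pos' hy
      nlinarith
  have := hmono (Set.self_mem_Ici) (Set.mem_Ici.mpr hx.le) hx
  simp only [hφ, Real.tanh_zero] at this
  norm_num at this
  linarith

lemma continuous_tanh' : Continuous Real.tanh :=
  continuous_iff_continuousAt.mpr fun y => (hasDerivAt_tanh' y).continuousAt

lemma gnum_pos {x : ℝ} (hx : 0 < x) : 0 < Real.tanh x - x * (1 - Real.tanh x ^ 2) := by
  have hc := Real.cosh_pos x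
  have hid : 1 - Real.tanh x ^ 2 = 1 / Real.cosh x ^ 2 := by
    rw [Real.tanh_eq_sinh_div_cosh]
    have h := Real.cosh_sq_sub_sinh_sq x
    field_simp
    linarith [h]
  have hsc : x < Real.sinh x * Real.cosh x := by
    have h1 : 2 * x < Real.sinh (2 * x) := Real.self_lt_sinh_iff.mpr (by linarith)
    rw [Real.sinh_two_mul] at h1
    linarith
  rw [hid, Real.tanh_eq_sinh_div_cosh, sub_pos, mul_one_div]
  rw [div_lt_div_iff₀ (by positivity : (0:ℝ) < Real.cosh x ^ 2) hc]
  nlinarith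

lemma hasDerivAt_g {x : ℝ} (hx : 0 < x) :
    HasDerivAt (fun y => y / Real.tanh y)
      ((Real.tanh x - x * (1 - Real.tanh x ^ 2)) / Real.tanh x ^ 2) x := by
  have ht := tanh_pos' hx
  have h := (hasDerivAt_id x).fun_div (hasDerivAt_tanh' x) (ne_of_gt ht)
  refine h.congr_deriv ?_
  simp only [id_eq, one_mul]

lemma g_strictMono : StrictMonoOn (fun y => y / Real.tanh y) (Set.Ioi 0) := by
  apply strictMonoOn_of_deriv_pos (convex_Ioi 0)
  · apply ContinuousOn.div continuousOn_id continuous_tanh'.continuousOn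
    intro y hy
    exact ne_of_gt (tanh_pos' hy)
  · intro y hy
    rw [interior_Ioi] at hy
    rw [(hasDerivAt_g hy).deriv]
    have := tanh_pos' hy
    exact div_pos (gnum_pos hy) (by positivity)

lemma g_gt_one {x : ℝ} (hx : 0 < x) : 1 < x / Real.tanh x :=
  (one_lt_div (tanh_pos' hx)).mpr (tanh_lt' hx)

lemma contG {G : ℝ → ℝ} {J : ℝ} (hJ : 1 < J) (hGpos : ∀ K, 1 < K → 0 < G K)
    (hgG : ∀ K, 1 < K → G K / Real.tanh (G K) = K) : ContinuousAt G J := by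
  rw [Metric.continuousAt_iff]
  intro ε hε
  set x₀ := G J with hx₀
  have hx₀pos : 0 < x₀ := hGpos J hJ
  set ε' := min ε (x₀ / 2) with hε'
  have hε'pos : 0 < ε' := lt_min hε (by linarith)
  have hε'le : ε' ≤ ε := min_le_left _ _
  have hε'le2 : ε' ≤ x₀ / 2 := min_le_right _ _
  set a := x₀ - ε' with ha
  set b := x₀ + ε' with hb
  have hapos : 0 < a := by simp only [ha]; linarith
  have hbpos : 0 < b := by simp only [hb]; linarith
  have hJm : a / Real.tanh a < J := by
    have := g_strictMono (Set.mem_Ioi.mpr hapos) (Set.mem_Ioi.mpr hx₀pos) (by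
      simp only [ha]; linarith)
    rw [← hgG J hJ]
    exact this
  have hJp : J < b / Real.tanh b := by
    have := g_strictMono (Set.mem_Ioi.mpr hx₀pos) (Set.mem_Ioi.mpr hbpos) (by
      simp only [hb]; linarith)
    rw [← hgG J hJ]
    exact this
  have hJm1 : 1 < a / Real.tanh a := g_gt_one hapos
  refine ⟨min (J - a / Real.tanh a) (b / Real.tanh b - J), by
    apply lt_min <;> linarith, ?_⟩
  intro K hK
  rw [Real.dist_eq] at hK
  have hK1 : a / Real.tanh a < K := by
    have := abs_lt.mp (lt_of_lt_of_le hK (min_le_left _ _))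
    linarith [this.1]
  have hK2 : K < b / Real.tanh b := by
    have := abs_lt.mp (lt_of_lt_of_le hK (min_le_right _ _))
    linarith [this.2]
  have hKgt1 : 1 < K := lt_trans hJm1 hK1
  have hGKpos : 0 < G K := hGpos K hKgt1
  have hgK := hgG K hKgt1
  have h1 : a < G K := by
    by_contra h
    push_neg at h
    have := g_strictMono.monotoneOn (Set.mem_Ioi.mpr hGKpos) (Set.mem_Ioi.mpr hapos) h
    rw [hgK] at this
    linarith
  have h2 : G K < b := by
    by_contra h
    push_neg at h
    have := g_strictMono.monotoneOn (Set.mem_Ioi.mpr hbpos) (Set.mem_Ioi.mpr hGKpos) h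
    rw [hgK] at this
    linarith
  rw [Real.dist_eq, abs_lt]
  constructor <;> simp only [ha, hb] at h1 h2 ⊢ <;> linarith

lemma flim : Tendsto (fun y => y * Real.tanh y ^ 2 / (3 * (y - Real.tanh y)))
    (nhdsWithin 0 (Set.Ioi 0)) (nhds 1) := by
  have hmem : Set.Ioo (0:ℝ) 1 ∈ nhdsWithin (0:ℝ) (Set.Ioi 0) :=
    Ioo_mem_nhdsGT (by norm_num)
  have hlo : Tendsto (fun y : ℝ => (1 - y ^ 2 / 3) ^ 2) (nhdsWithin 0 (Set.Ioi 0)) (nhds 1) := by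
    have h : ContinuousAt (fun y : ℝ => (1 - y ^ 2 / 3) ^ 2) 0 := by fun_prop
    have h2 : Tendsto (fun y : ℝ => (1 - y ^ 2 / 3) ^ 2) (nhdsWithin 0 (Set.Ioi 0))
        (nhds ((1 - (0:ℝ) ^ 2 / 3) ^ 2)) := h.tendsto.mono_left nhdsWithin_le_nhds
    norm_num at h2
    exact h2
  have hhi : Tendsto (fun y : ℝ => (1 - y ^ 2 / 3)⁻¹) (nhdsWithin 0 (Set.Ioi 0)) (nhds 1) := by
    have h : ContinuousAt (fun y : ℝ => (1 - y ^ 2 / 3)⁻¹) 0 := by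
      apply ContinuousAt.inv₀ (by fun_prop)
      norm_num
    have h2 : Tendsto (fun y : ℝ => (1 - y ^ 2 / 3)⁻¹) (nhdsWithin 0 (Set.Ioi 0))
        (nhds ((1 - (0:ℝ) ^ 2 / 3)⁻¹)) := h.tendsto.mono_left nhdsWithin_le_nhds
    norm_num at h2
    exact h2
  apply tendsto_of_tendsto_of_tendsto_of_le_of_le' hlo hhi
  · filter_upwards [hmem] with y hy
    obtain ⟨hy0, hy1⟩ := hy
    set t := Real.tanh y with htdef
    have ht0 : 0 < t := tanh_pos' hy0
    have hty : t < y := tanh_lt' hy0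
    have hk3 : y - y ^ 3 / 3 < t := key3 hy0
    have hu : 0 < 1 - y ^ 2 / 3 := by nlinarith
    have h1 : y * (1 - y ^ 2 / 3) < t := by nlinarith
    have hden : 0 < 3 * (y - t) := by linarith
    rw [le_div_iff₀ hden]
    calc (1 - y ^ 2 / 3) ^ 2 * (3 * (y - t)) ≤ (1 - y ^ 2 / 3) ^ 2 * y ^ 3 := by
          nlinarith [sq_nonneg (1 - y ^ 2 / 3)]
      _ = y * (y * (1 - y ^ 2 / 3)) ^ 2 := by ring
      _ ≤ y * t ^ 2 := by
          have h2 : (y * (1 - y ^ 2 / 3)) ^ 2 ≤ t ^ 2 :=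
            pow_le_pow_left₀ (by positivity) h1.le 2
          nlinarith
  · filter_upwards [hmem] with y hy
    obtain ⟨hy0, hy1⟩ := hy
    set t := Real.tanh y with htdef
    have ht0 : 0 < t := tanh_pos' hy0
    have hty : t < y := tanh_lt' hy0
    have hk2 : t + t ^ 3 / 3 < y := key2 hy0
    have hk3 : y - y ^ 3 / 3 < t := key3 hy0
    have hu : 0 < 1 - y ^ 2 / 3 := by nlinarith
    have h1 : y * (1 - y ^ 2 / 3) < t := by nlinarith
    have hden : 0 < 3 * (y - t) := by linarith
    rw [inv_eq_one_div, div_le_div_iff₀ hden hu]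
    have h2 : t ^ 2 * (y * (1 - y ^ 2 / 3)) ≤ t ^ 2 * t :=
      mul_le_mul_of_nonneg_left h1.le (sq_nonneg t)
    nlinarith

set_option maxHeartbeats 1000000 in
theorem stmt_10 (μ₀ : ℝ → ℝ)
    (hμ₀ : ∀ J : ℝ, 1 < J → 0 < μ₀ J ∧ μ₀ J = Real.tanh (J * μ₀ J))
    (p2 : ℝ → ℝ)
    (hp2 : ∀ J : ℝ, p2 J = if 1 < J then (1 / 2) * deriv (fun J' => μ₀ J' ^ 2) J else 0) :
    Tendsto (fun J : ℝ => μ₀ J ^ 2 / (3 * (1 - 1 / J))) (nhdsWithin 1 (Set.Ioi 1)) (nhds 1) ∧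
    ¬ ContinuousAt p2 1 := by
  have hμpos : ∀ J : ℝ, 1 < J → 0 < μ₀ J := fun J h => (hμ₀ J h).1
  have hμeq : ∀ J : ℝ, 1 < J → μ₀ J = Real.tanh (J * μ₀ J) := fun J h => (hμ₀ J h).2
  -- μ₀ → 0 as J → 1⁺
  have hμlim : Tendsto μ₀ (nhdsWithin 1 (Set.Ioi 1)) (nhds 0) := by
    have hsqrt : Tendsto (fun J : ℝ => Real.sqrt (3 * (J - 1)))
        (nhdsWithin 1 (Set.Ioi 1)) (nhds 0) := by
      have hc : ContinuousAt (fun J : ℝ => Real.sqrt (3 * (J - 1))) 1 := by fun_prop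
      have h2 : Tendsto (fun J : ℝ => Real.sqrt (3 * (J - 1))) (nhdsWithin 1 (Set.Ioi 1))
          (nhds (Real.sqrt (3 * ((1:ℝ) - 1)))) := hc.tendsto.mono_left nhdsWithin_le_nhds
      simp only [sub_self, mul_zero, Real.sqrt_zero] at h2
      exact h2
    apply tendsto_of_tendsto_of_tendsto_of_le_of_le' tendsto_const_nhds hsqrt
    · filter_upwards [self_mem_nhdsWithin] with J hJ
      exact (hμpos J hJ).le
    · filter_upwards [self_mem_nhdsWithin] with J hJ
      have hJ1 : (1:ℝ) < J := hJ
      have hμ : 0 < μ₀ J := hμpos J hJ1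
      have hx : 0 < J * μ₀ J := mul_pos (by linarith) hμ
      have h := key2 hx
      rw [← hμeq J hJ1] at h
      apply Real.le_sqrt_of_sq_le
      nlinarith
  -- J * μ₀ J → 0⁺
  have hxlim : Tendsto (fun J : ℝ => J * μ₀ J) (nhdsWithin 1 (Set.Ioi 1))
      (nhdsWithin 0 (Set.Ioi 0)) := by
    rw [tendsto_nhdsWithin_iff]
    constructor
    · have h1 : Tendsto (fun J : ℝ => J) (nhdsWithin 1 (Set.Ioi 1)) (nhds 1) :=
        tendsto_id.mono_left nhdsWithin_le_nhds
      have := h1.mul hμlim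
      norm_num at this
      exact this
    · filter_upwards [self_mem_nhdsWithin] with J hJ
      exact mul_pos (by exact lt_trans one_pos hJ) (hμpos J hJ)
  have hpart1 : Tendsto (fun J : ℝ => μ₀ J ^ 2 / (3 * (1 - 1 / J)))
      (nhdsWithin 1 (Set.Ioi 1)) (nhds 1) := by
    have hcomp := flim.comp hxlim
    apply hcomp.congr'
    filter_upwards [self_mem_nhdsWithin] with J hJ
    have hJ1 : (1:ℝ) < J := hJ
    have hμ : 0 < μ₀ J := hμpos J hJ1
    simp only [Function.comp_apply]
    rw [← hμeq J hJ1]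
    have hJ0 : J ≠ 0 := by linarith
    have hd1 : (0:ℝ) < 3 * (J * μ₀ J - μ₀ J) := by nlinarith
    have hd2 : (0:ℝ) < 3 * (1 - 1 / J) := by
      have h1 : 1 / J < 1 := by rw [div_lt_one (by linarith)]; exact hJ1
      linarith
    rw [div_eq_div_iff (ne_of_gt hd1) (ne_of_gt hd2)]
    field_simp
  refine ⟨hpart1, ?_⟩
  -- differentiability of μ₀² on (1, ∞)
  have hdiff : ∀ K : ℝ, 1 < K → DifferentiableAt ℝ (fun K' => μ₀ K' ^ 2) K := by
    intro K hK
    set G : ℝ → ℝ := fun K' => K' * μ₀ K' with hGdef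
    have hGpos : ∀ L, 1 < L → 0 < G L := fun L hL =>
      mul_pos (lt_trans one_pos hL) (hμpos L hL)
    have hgG : ∀ L, 1 < L → G L / Real.tanh (G L) = L := by
      intro L hL
      have h := hμeq L hL
      simp only [hGdef]
      rw [← h]
      have : μ₀ L ≠ 0 := ne_of_gt (hμpos L hL)
      field_simp
    have hGcont : ContinuousAt G K := contG hK hGpos hgG
    have hx0 : 0 < G K := hGpos K hK
    have hfg : ∀ᶠ y in nhds K, (fun z => z / Real.tanh z) (G y) = y := by
      filter_upwards [eventually_gt_nhds hK] with L hL
      exact hgG L hL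
    have hnum := gnum_pos hx0
    have ht := tanh_pos' hx0
    have hne : (Real.tanh (G K) - G K * (1 - Real.tanh (G K) ^ 2)) / Real.tanh (G K) ^ 2 ≠ 0 :=
      ne_of_gt (div_pos hnum (by positivity))
    have hG' := HasDerivAt.of_local_left_inverse hGcont (hasDerivAt_g hx0) hne hfg
    have hK0 : K ≠ 0 := by positivity
    have hdiv := (hG'.div (hasDerivAt_id K) hK0)
    have hpow := hdiv.pow 2
    have heq : (fun K' => μ₀ K' ^ 2) =ᶠ[nhds K] (fun K' => (G K' / K') ^ 2) := by
      filter_upwards [eventually_gt_nhds hK] with L hL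
      have hL0 : L ≠ 0 := by positivity
      simp only [hGdef]
      rw [mul_comm, mul_div_assoc, div_self hL0, mul_one]
    exact (hpow.congr_of_eventuallyEq heq).differentiableAt
  -- the contradiction
  intro hcont
  have hp21 : p2 1 = 0 := by rw [hp2]; norm_num
  have htend : Tendsto p2 (nhdsWithin 1 (Set.Ioi 1)) (nhds 0) := by
    have h := hcont.tendsto
    rw [hp21] at h
    exact h.mono_left nhdsWithin_le_nhds
  have hev1 : ∀ᶠ J in nhdsWithin 1 (Set.Ioi 1), |p2 J| < 1 / 100 := by
    have h := Metric.tendsto_nhds.mp htend (1 / 100) (by norm_num)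
    simpa [Real.dist_eq] using h
  have hlow : ∀ᶠ J in nhdsWithin 1 (Set.Ioi 1), 1 / 2 < μ₀ J ^ 2 / (3 * (1 - 1 / J)) :=
    hpart1.eventually (eventually_gt_nhds (by norm_num))
  have hup : ∀ᶠ J in nhdsWithin 1 (Set.Ioi 1), μ₀ J ^ 2 / (3 * (1 - 1 / J)) < 2 :=
    hpart1.eventually (eventually_lt_nhds (by norm_num))
  have hall := hev1.and (hlow.and hup)
  rw [eventually_nhdsWithin_iff, Metric.eventually_nhds_iff] at hall
  obtain ⟨ε, hεpos, hball⟩ := hall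
  set η := min ε 1 with hηdef
  have hηpos : 0 < η := lt_min hεpos one_pos
  have hηle : η ≤ 1 := min_le_right _ _
  have key : ∀ J : ℝ, 1 < J → J < 1 + η →
      |p2 J| < 1 / 100 ∧ 1 / 2 < μ₀ J ^ 2 / (3 * (1 - 1 / J)) ∧
        μ₀ J ^ 2 / (3 * (1 - 1 / J)) < 2 := by
    intro J h1 h2
    apply hball _ (Set.mem_Ioi.mpr h1)
    rw [Real.dist_eq, abs_of_pos (by linarith : (0:ℝ) < J - 1)]
    have : η ≤ ε := min_le_left _ _
    linarith
  set s := Set.Ioo (1:ℝ) (1 + η) with hsdef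
  have hder : ∀ x ∈ s, HasDerivWithinAt (fun K => μ₀ K ^ 2)
      (deriv (fun K => μ₀ K ^ 2) x) s x := fun x hx =>
    ((hdiff x hx.1).hasDerivAt).hasDerivWithinAt
  have hbound : ∀ x ∈ s, ‖deriv (fun K => μ₀ K ^ 2) x‖ ≤ 1 / 50 := by
    intro x hx
    have h := (key x hx.1 hx.2).1
    have h2 := hp2 x
    rw [if_pos hx.1] at h2
    have h3 : deriv (fun K => μ₀ K ^ 2) x = 2 * p2 x := by rw [h2]; ring
    rw [Real.norm_eq_abs, h3, abs_mul, abs_two]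
    linarith [abs_nonneg (p2 x), h]
  set b := 1 + η / 2 with hbdef
  set a := 1 + η / 2400 with hadef
  have hain : a ∈ s := by
    simp only [hsdef, hadef, Set.mem_Ioo]
    constructor <;> linarith
  have hbin : b ∈ s := by
    simp only [hsdef, hbdef, Set.mem_Ioo]
    constructor <;> linarith
  have hmvt := Convex.norm_image_sub_le_of_norm_hasDerivWithin_le hder hbound
    (convex_Ioo _ _) hain hbin
  rw [Real.norm_eq_abs, Real.norm_eq_abs] at hmvt
  have ha1 : (1:ℝ) < a := by rw [hadef]; linarith
  have hb1 : (1:ℝ) < b := by rw [hbdef]; linarith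
  have hka := key a ha1 (by rw [hadef]; linarith)
  have hkb := key b hb1 (by rw [hbdef]; linarith)
  have h3a : (0:ℝ) < 3 * (1 - 1 / a) := by
    have h1 : 1 / a < 1 := by rw [div_lt_one (by linarith)]; exact ha1
    linarith
  have h3b : (0:ℝ) < 3 * (1 - 1 / b) := by
    have h1 : 1 / b < 1 := by rw [div_lt_one (by linarith)]; exact hb1
    linarith
  have hma : μ₀ a ^ 2 < 2 * (3 * (1 - 1 / a)) := (div_lt_iff₀ h3a).mp hka.2.2
  have hmb : 1 / 2 * (3 * (1 - 1 / b)) < μ₀ b ^ 2 := (lt_div_iff₀ h3b).mp hkb.2.1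
  have h1a : 1 - 1 / a ≤ a - 1 := by
    have e : 1 - 1 / a = (a - 1) / a := by field_simp
    rw [e, div_le_iff₀ (by linarith : (0:ℝ) < a)]
    nlinarith
  have h1b : (b - 1) / 2 ≤ 1 - 1 / b := by
    have e : 1 - 1 / b = (b - 1) / b := by field_simp
    rw [e, div_le_div_iff₀ (by norm_num) (by linarith : (0:ℝ) < b)]
    have hble : b ≤ 2 := by rw [hbdef]; linarith
    nlinarith
  have habs : |b - a| = b - a := abs_of_pos (by rw [hadef, hbdef]; linarith)
  rw [habs] at hmvt
  have hle := le_abs_self (μ₀ b ^ 2 - μ₀ a ^ 2)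
  have hba : b - a ≤ η / 2 := by rw [hadef, hbdef]; linarith
  have hb1' : b - 1 = η / 2 := by rw [hbdef]; ring
  have ha1' : a - 1 = η / 2400 := by rw [hadef]; ring
  linarith
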